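/- arXiv:2210.10384 — 2 statements merged into one kernel-verified Lean document; each statement's English description precedes it below -/
import Mathlib

section
/- Let X be a topological space. Then for every function f: X → ℝ, the distance from f to the set of σ-fragmented real-valued functions equals half the σ-fragmentability index: d(f, σFrag(X,ℝ)) = (1/2)·σ-frag(f). -/
open Set Filter Ordinal ENNReal

universe u v

section Defs

variable {X : Type u} {E : Type v}

/-- `f` restricted to `A` is `ε`-fragmented: every nonempty subset of `A` has a relatively
open nonempty piece on which the oscillation (diameter of the image) of `f` is at most `ε`. -/
def EpsFragOn [TopologicalSpace X] [PseudoEMetricSpace E] (f : X → E) (A : Set X)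
    (ε : ℝ≥0∞) : Prop :=
  ∀ F : Set X, F ⊆ A → F.Nonempty → ∃ V : Set X, IsOpen V ∧ (V ∩ F).Nonempty ∧
    EMetric.diam (f '' (V ∩ F)) ≤ ε

/-- The fragmentability index `frag f = inf {ε > 0 : f is ε-fragmented}` (with `inf ∅ = ∞`). -/
noncomputable def fragIdx [TopologicalSpace X] [PseudoEMetricSpace E] (f : X → E) : ℝ≥0∞ :=
  sInf {ε | 0 < ε ∧ EpsFragOn f Set.univ ε}

/-- A set `H` is resolvable: every nonempty `A ⊆ X` has a relatively open nonempty piece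
entirely inside `H` or entirely inside its complement. -/
def Resolvable [TopologicalSpace X] (H : Set X) : Prop :=
  ∀ A : Set X, A.Nonempty → ∃ U : Set X, IsOpen U ∧ (U ∩ A).Nonempty ∧
    (U ∩ A ⊆ H ∨ U ∩ A ⊆ Hᶜ)

/-- The σ-fragmentability index by resolvable sets. -/
noncomputable def sfragIdx [TopologicalSpace X] [PseudoEMetricSpace E] (f : X → E) : ℝ≥0∞ :=
  sInf {ε | 0 < ε ∧ ∃ H : ℕ → Set X, (∀ n, Resolvable (H n)) ∧ (⋃ n, H n) = Set.univ ∧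
    ∀ n, EpsFragOn f (H n) ε}

/-- `g` is constant on each set of some resolvable partition of `X`, i.e. on each difference
`U (γ+1) \ U γ` of an increasing transfinite sequence of open sets from `∅` to `X`,
continuous at limit ordinals. -/
def ConstOnResolvablePartition [TopologicalSpace X] (g : X → E) : Prop :=
  ∃ (κ : Ordinal.{u}) (U : Ordinal.{u} → Set X),
    (∀ α, IsOpen (U α)) ∧ (∀ α β : Ordinal, α ≤ β → U α ⊆ U β) ∧
    U 0 = ∅ ∧ U κ = Set.univ ∧
    (∀ γ, γ ≤ κ → Order.IsSuccLimit γ → U γ = ⋃ α < γ, U α) ∧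
    (∀ γ < κ, ∀ x ∈ U (γ + 1) \ U γ, ∀ y ∈ U (γ + 1) \ U γ, g x = g y)

/-- The transfinite derivation of open sets in the definition of the oscillation rank
`β(f, ε)`:  `U 0 = ∅`, `U (α+1) = U α ∪ {x ∉ U α : ∃ open V ∋ x, diam f (V \ U α) < ε}`,
and unions at limit ordinals. -/
noncomputable def oscSet [TopologicalSpace X] [PseudoEMetricSpace E] (f : X → E)
    (ε : ℝ≥0∞) (o : Ordinal.{u}) : Set X :=
  Ordinal.limitRecOn o ∅
    (fun _ U => U ∪ {x | x ∉ U ∧ ∃ V : Set X, IsOpen V ∧ x ∈ V ∧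
      EMetric.diam (f '' (V \ U)) < ε})
    (fun γ _ ih => ⋃ (β : Ordinal) (h : β < γ), ih β h)

/-- `f` has countable oscillation rank: `β(f) < ω₁`, i.e. for every `ε > 0` the derivation
reaches `X` at some countable ordinal. -/
def CountableOscRank [TopologicalSpace X] [PseudoEMetricSpace E] (f : X → E) : Prop :=
  ∀ ε : ℝ≥0∞, 0 < ε → ∃ α < ω₁, oscSet f ε α = Set.univ

/-- A transfinite sequence `(V α)_{α ≤ κ}` of open sets has property `*(f, ε)`. -/
def StarProp [TopologicalSpace X] [PseudoEMetricSpace E] (f : X → E) (ε : ℝ≥0∞)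
    (κ : Ordinal.{u}) (V : Ordinal.{u} → Set X) : Prop :=
  (∀ α, α ≤ κ → IsOpen (V α)) ∧ (∀ α β : Ordinal, α ≤ β → β ≤ κ → V α ⊆ V β) ∧
  V 0 = ∅ ∧ V κ = Set.univ ∧
  (∀ γ, γ ≤ κ → Order.IsSuccLimit γ → V γ = ⋃ α < γ, V α) ∧
  (∀ α < κ, ∀ x ∈ V (α + 1) \ V α, ∃ W : Set X, IsOpen W ∧ x ∈ W ∧
    EMetric.diam (f '' (W \ V α)) < ε)

/-- Uniform distance `d(f, g) = sup_x ρ(f x, g x)` (in `[0, ∞]`). -/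
noncomputable def unifDist [PseudoEMetricSpace E] (f g : X → E) : ℝ≥0∞ :=
  ⨆ x, edist (f x) (g x)

/-- Distance from `f` to the family of σ-fragmented mappings. -/
noncomputable def distToSFrag [TopologicalSpace X] [PseudoEMetricSpace E] (f : X → E) : ℝ≥0∞ :=
  ⨅ (g : {g : X → E // sfragIdx g = 0}), unifDist f g.1

end Defs

section Aux

variable {X : Type u} [TopologicalSpace X]

/-! ### Resolvable sets form an algebra -/

theorem Resolvable.congr_set {H H' : Set X} (h : Resolvable H) (e : H = H') : Resolvable H' :=
  e ▸ h

theorem Resolvable.compl {H : Set X} (h : Resolvable H) : Resolvable Hᶜ := by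
  intro A hA
  obtain ⟨U, hU, hne, hsub⟩ := h A hA
  exact ⟨U, hU, hne, by rwa [compl_compl, or_comm]⟩

theorem resolvable_empty : Resolvable (∅ : Set X) := by
  intro A hA
  exact ⟨Set.univ, isOpen_univ, by rwa [Set.univ_inter], Or.inr (by simp)⟩

theorem Resolvable.inter {H H' : Set X} (h : Resolvable H) (h' : Resolvable H') :
    Resolvable (H ∩ H') := by
  intro A hA
  obtain ⟨U, hU, hne, hsub⟩ := h A hA
  rcases hsub with hsub | hsub
  · obtain ⟨U', hU', hne', hsub'⟩ := h' (U ∩ A) hne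
    rcases hsub' with hsub' | hsub'
    · refine ⟨U' ∩ U, hU'.inter hU, by rwa [Set.inter_assoc], Or.inl ?_⟩
      intro x hx
      rw [Set.inter_assoc] at hx
      exact ⟨hsub hx.2, hsub' hx⟩
    · refine ⟨U' ∩ U, hU'.inter hU, by rwa [Set.inter_assoc], Or.inr ?_⟩
      intro x hx
      rw [Set.inter_assoc] at hx
      intro hmem
      exact hsub' hx hmem.2
  · exact ⟨U, hU, hne, Or.inr fun x hx hmem => hsub hx hmem.1⟩

theorem Resolvable.union {H H' : Set X} (h : Resolvable H) (h' : Resolvable H') :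
    Resolvable (H ∪ H') :=
  (h.compl.inter h'.compl).compl.congr_set (by rw [Set.compl_inter, compl_compl, compl_compl])

theorem resolvable_biUnion_lt (H : ℕ → Set X) (hH : ∀ n, Resolvable (H n)) (n : ℕ) :
    Resolvable (⋃ m < n, H m) := by
  induction n with
  | zero => exact resolvable_empty.congr_set (by simp)
  | succ n ih =>
      refine (ih.union (hH n)).congr_set ?_
      exact (Set.biUnion_lt_succ H n).symm

theorem ord_add_one_le {a b : Ordinal.{u}} (h : a < b) : a + 1 ≤ b := by
  rw [Ordinal.add_one_eq_succ]
  exact Order.succ_le_iff.mpr h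

theorem EpsFragOn.mono {E : Type v} [PseudoEMetricSpace E] {f : X → E} {A B : Set X}
    {ε : ℝ≥0∞} (h : EpsFragOn f B ε) (hAB : A ⊆ B) : EpsFragOn f A ε :=
  fun F hF hFne => h F (hF.trans hAB) hFne

/-! ### The transfinite construction for a single ε-fragmented piece -/

section Construction

variable (f : X → ℝ) (K : Set X) (ε : ℝ≥0∞) (hfrag : EpsFragOn f K ε)

open Classical in
/-- A choice of an open set witnessing fragmentation of the residual `K \ S`. -/
noncomputable def pickV (S : Set X) : Set X :=
  if h : (K \ S).Nonempty then (hfrag (K \ S) Set.diff_subset h).choose else ∅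

theorem pickV_spec {S : Set X} (h : (K \ S).Nonempty) :
    IsOpen (pickV f K ε hfrag S) ∧ (pickV f K ε hfrag S ∩ (K \ S)).Nonempty ∧
      EMetric.diam (f '' (pickV f K ε hfrag S ∩ (K \ S))) ≤ ε := by
  rw [pickV, dif_pos h]
  exact (hfrag (K \ S) Set.diff_subset h).choose_spec

theorem pickV_open (S : Set X) : IsOpen (pickV f K ε hfrag S) := by
  rw [pickV]
  split_ifs with h
  · exact (hfrag (K \ S) Set.diff_subset h).choose_spec.1
  · exact isOpen_empty

/-- The transfinite exhaustion of `K` by open sets. -/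
noncomputable def Useq (o : Ordinal.{u}) : Set X :=
  Ordinal.limitRecOn o ∅ (fun _ U => U ∪ pickV f K ε hfrag U)
    (fun γ _ ih => ⋃ (β : Ordinal) (h : β < γ), ih β h)

theorem Useq_zero : Useq f K ε hfrag 0 = ∅ :=
  Ordinal.limitRecOn_zero _ _ _

theorem Useq_succ (o : Ordinal.{u}) :
    Useq f K ε hfrag (o + 1) = Useq f K ε hfrag o ∪ pickV f K ε hfrag (Useq f K ε hfrag o) := by
  rw [Useq, Ordinal.add_one_eq_succ, Ordinal.limitRecOn_succ]
  rfl

theorem Useq_limit {o : Ordinal.{u}} (h : Order.IsSuccLimit o) :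
    Useq f K ε hfrag o = ⋃ (β : Ordinal) (_ : β < o), Useq f K ε hfrag β := by
  rw [Useq, Ordinal.limitRecOn_limit _ _ _ _ h]
  rfl

theorem Useq_mono : ∀ {α β : Ordinal.{u}}, α ≤ β →
    Useq f K ε hfrag α ⊆ Useq f K ε hfrag β := by
  intro α β
  induction β using Ordinal.limitRecOn with
  | zero => intro h; rw [nonpos_iff_eq_zero.mp h]
  | add_one β ih =>
      intro h
      rcases eq_or_lt_of_le h with rfl | hlt
      · exact subset_rfl
      · have h2 : α ≤ β := Order.lt_add_one_iff.mp hlt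
        rw [Useq_succ]
        exact (ih h2).trans Set.subset_union_left
  | limit β hβ ih =>
      intro h
      rcases eq_or_lt_of_le h with rfl | hlt
      · exact subset_rfl
      · rw [Useq_limit f K ε hfrag hβ]
        exact Set.subset_biUnion_of_mem hlt

theorem Useq_open (o : Ordinal.{u}) : IsOpen (Useq f K ε hfrag o) := by
  induction o using Ordinal.limitRecOn with
  | zero => rw [Useq_zero]; exact isOpen_empty
  | add_one β ih =>
      rw [Useq_succ]
      exact ih.union (pickV_open f K ε hfrag _)
  | limit β hβ ih =>
      rw [Useq_limit f K ε hfrag hβ]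
      exact isOpen_iUnion fun γ => isOpen_iUnion fun hγ => ih γ hγ

theorem Useq_covers : ∃ θ : Ordinal.{u}, K ⊆ Useq f K ε hfrag θ := by
  by_contra hcon
  push_neg at hcon
  have h' : ∀ θ : Ordinal.{u},
      (pickV f K ε hfrag (Useq f K ε hfrag θ) ∩ (K \ Useq f K ε hfrag θ)).Nonempty := by
    intro θ
    obtain ⟨x, hxK, hxU⟩ := Set.not_subset.mp (hcon θ)
    exact (pickV_spec f K ε hfrag ⟨x, hxK, hxU⟩).2.1
  have hx : ∀ θ : Ordinal.{u}, (h' θ).choose ∈ Useq f K ε hfrag (θ + 1) ∧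
      (h' θ).choose ∉ Useq f K ε hfrag θ := by
    intro θ
    have := (h' θ).choose_spec
    constructor
    · rw [Useq_succ]; exact Set.mem_union_right _ this.1
    · exact this.2.2
  refine not_injective_of_ordinal (fun θ => (h' θ).choose) ?_
  intro θ θ' he
  have he' : (h' θ).choose = (h' θ').choose := he
  by_contra hne
  rcases lt_or_gt_of_ne hne with hlt | hlt
  · have hm := Useq_mono f K ε hfrag (ord_add_one_le hlt) (hx θ).1
    rw [he'] at hm
    exact (hx θ').2 hm
  · have hm := Useq_mono f K ε hfrag (ord_add_one_le hlt) (hx θ').1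
    rw [← he'] at hm
    exact (hx θ).2 hm

/-- The rank of a point: least `β` with `x ∈ U (β + 1)`. -/
noncomputable def rk (x : X) : Ordinal.{u} :=
  sInf {β : Ordinal.{u} | x ∈ Useq f K ε hfrag (β + 1)}

theorem rk_spec {x : X} (hx : x ∈ K) :
    x ∈ Useq f K ε hfrag (rk f K ε hfrag x + 1) ∧ x ∉ Useq f K ε hfrag (rk f K ε hfrag x) := by
  obtain ⟨θ, hθ⟩ := Useq_covers f K ε hfrag
  have hne : {β : Ordinal.{u} | x ∈ Useq f K ε hfrag (β + 1)}.Nonempty :=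
    ⟨θ, Useq_mono f K ε hfrag (le_of_lt (lt_add_one θ)) (hθ hx)⟩
  have hmem : x ∈ Useq f K ε hfrag (rk f K ε hfrag x + 1) := csInf_mem hne
  refine ⟨hmem, fun hcon => ?_⟩
  have key : ∃ γ < rk f K ε hfrag x, x ∈ Useq f K ε hfrag (γ + 1) := by
    rcases Ordinal.zero_or_succ_or_isSuccLimit (rk f K ε hfrag x) with h0 | ⟨γ, hγ⟩ | hlim
    · rw [h0, Useq_zero] at hcon; exact absurd hcon (Set.notMem_empty x)
    · refine ⟨γ, ?_, ?_⟩
      · rw [← hγ]; exact Order.lt_succ γ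
      · rwa [← hγ, ← Ordinal.add_one_eq_succ] at hcon
    · rw [Useq_limit f K ε hfrag hlim] at hcon
      obtain ⟨β, hβlt, hβ⟩ := Set.mem_iUnion₂.mp hcon
      exact ⟨β, hβlt, Useq_mono f K ε hfrag (le_of_lt (lt_add_one β)) hβ⟩
  obtain ⟨γ, hγlt, hγ⟩ := key
  have hmem' : γ ∈ {β : Ordinal.{u} | x ∈ Useq f K ε hfrag (β + 1)} := hγ
  have hle : rk f K ε hfrag x ≤ γ := csInf_le (OrderBot.bddBelow _) hmem'
  exact absurd hle (not_le_of_gt hγlt)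

/-- The piece containing `x`. -/
noncomputable def pieceOf (x : X) : Set X :=
  pickV f K ε hfrag (Useq f K ε hfrag (rk f K ε hfrag x)) ∩
    (K \ Useq f K ε hfrag (rk f K ε hfrag x))

theorem pieceOf_spec {x : X} (hx : x ∈ K) :
    x ∈ pieceOf f K ε hfrag x ∧ EMetric.diam (f '' pieceOf f K ε hfrag x) ≤ ε := by
  obtain ⟨h1, h2⟩ := rk_spec f K ε hfrag hx
  rw [Useq_succ] at h1
  have hxP : x ∈ pieceOf f K ε hfrag x := by
    rcases h1 with h1 | h1
    · exact absurd h1 h2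
    · exact ⟨h1, hx, h2⟩
  exact ⟨hxP, (pickV_spec f K ε hfrag ⟨x, hxP.2⟩).2.2⟩

open Classical in
/-- The approximating function: the "midpoint" value on each piece. -/
noncomputable def gA : X → ℝ := fun x =>
  if x ∈ K then sInf (f '' pieceOf f K ε hfrag x) + ε.toReal / 2 else f x

theorem gA_const_on_pieces : ∀ F : Set X, F ⊆ K → F.Nonempty →
    ∃ V : Set X, IsOpen V ∧ (V ∩ F).Nonempty ∧
      ∀ x ∈ V ∩ F, ∀ y ∈ V ∩ F, gA f K ε hfrag x = gA f K ε hfrag y := by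
  intro F hF hFne
  obtain ⟨θ, hθ⟩ := Useq_covers f K ε hfrag
  have hne : {α : Ordinal.{u} | (Useq f K ε hfrag α ∩ F).Nonempty}.Nonempty := by
    refine ⟨θ, ?_⟩
    obtain ⟨x, hx⟩ := hFne
    exact ⟨x, hθ (hF hx), hx⟩
  set μ := sInf {α : Ordinal.{u} | (Useq f K ε hfrag α ∩ F).Nonempty} with hμdef
  have hμmem : (Useq f K ε hfrag μ ∩ F).Nonempty := csInf_mem hne
  have hμsucc : ∃ γ, μ = γ + 1 := by
    rcases Ordinal.zero_or_succ_or_isSuccLimit μ with h0 | ⟨γ, hγ⟩ | hlim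
    · rw [h0, Useq_zero, Set.empty_inter] at hμmem
      exact absurd hμmem Set.not_nonempty_empty
    · exact ⟨γ, by rw [← Ordinal.add_one_eq_succ] at hγ; exact hγ.symm⟩
    · exfalso
      rw [Useq_limit f K ε hfrag hlim] at hμmem
      obtain ⟨x, hxU, hxF⟩ := hμmem
      obtain ⟨β, hβlt, hβ⟩ := Set.mem_iUnion₂.mp hxU
      have hmem' : β ∈ {α : Ordinal.{u} | (Useq f K ε hfrag α ∩ F).Nonempty} := ⟨x, hβ, hxF⟩
      have hle : μ ≤ β := by
        rw [hμdef]
        exact csInf_le (OrderBot.bddBelow _) hmem'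
      exact absurd hle (not_le_of_gt hβlt)
  obtain ⟨γ, hγ⟩ := hμsucc
  refine ⟨Useq f K ε hfrag (γ + 1), Useq_open f K ε hfrag _, by rwa [← hγ], ?_⟩
  have hγlt : γ < μ := by rw [hγ]; exact lt_add_one γ
  have hγempty : Useq f K ε hfrag γ ∩ F = ∅ := by
    by_contra hc
    have hmem' : γ ∈ {α : Ordinal.{u} | (Useq f K ε hfrag α ∩ F).Nonempty} :=
      Set.nonempty_iff_ne_empty.mpr hc
    have hle : μ ≤ γ := by
      rw [hμdef]
      exact csInf_le (OrderBot.bddBelow _) hmem'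
    exact absurd hle (not_le_of_gt hγlt)
  have hrk : ∀ x ∈ Useq f K ε hfrag (γ + 1) ∩ F, rk f K ε hfrag x = γ := by
    rintro x ⟨hxU, hxF⟩
    have hxK : x ∈ K := hF hxF
    have hxnotγ : x ∉ Useq f K ε hfrag γ := fun hc =>
      absurd (Set.mem_inter hc hxF) (by rw [hγempty]; exact Set.notMem_empty x)
    have hmem'' : γ ∈ {β : Ordinal.{u} | x ∈ Useq f K ε hfrag (β + 1)} := hxU
    have hle : rk f K ε hfrag x ≤ γ := csInf_le (OrderBot.bddBelow _) hmem''
    rcases eq_or_lt_of_le hle with h | h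
    · exact h
    · exfalso
      have : Useq f K ε hfrag (rk f K ε hfrag x + 1) ⊆ Useq f K ε hfrag γ :=
        Useq_mono f K ε hfrag (ord_add_one_le h)
      exact hxnotγ (this (rk_spec f K ε hfrag hxK).1)
  intro x hx y hy
  have hxK : x ∈ K := hF hx.2
  have hyK : y ∈ K := hF hy.2
  simp only [gA]
  rw [if_pos hxK, if_pos hyK, pieceOf, pieceOf, hrk x hx, hrk y hy]

theorem gA_close (hεtop : ε ≠ ⊤) {x : X} (hx : x ∈ K) :
    edist (f x) (gA f K ε hfrag x) ≤ ε / 2 := by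
  obtain ⟨hxP, hdiam⟩ := pieceOf_spec f K ε hfrag hx
  set P := pieceOf f K ε hfrag x with hP
  have hdist : ∀ y ∈ P, |f y - f x| ≤ ε.toReal := by
    intro y hy
    have h1 : edist (f y) (f x) ≤ ε :=
      le_trans (EMetric.edist_le_diam_of_mem (Set.mem_image_of_mem f hy)
        (Set.mem_image_of_mem f hxP)) hdiam
    rw [edist_dist] at h1
    have := (ENNReal.ofReal_le_iff_le_toReal hεtop).mp h1
    rwa [Real.dist_eq] at this
  have hbdd : BddBelow (f '' P) := by
    refine ⟨f x - ε.toReal, ?_⟩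
    rintro a ⟨y, hy, rfl⟩
    have := hdist y hy
    have := abs_le.mp this
    linarith [this.1]
  have hnePf : (f '' P).Nonempty := ⟨f x, Set.mem_image_of_mem f hxP⟩
  have h1 : sInf (f '' P) ≤ f x := csInf_le hbdd (Set.mem_image_of_mem f hxP)
  have h2 : f x - ε.toReal ≤ sInf (f '' P) := by
    refine le_csInf hnePf ?_
    rintro a ⟨y, hy, rfl⟩
    have := abs_le.mp (hdist y hy)
    linarith [this.1]
  have hεnn : (0:ℝ) ≤ ε.toReal := ENNReal.toReal_nonneg
  have hgx : gA f K ε hfrag x = sInf (f '' P) + ε.toReal / 2 := by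
    simp only [gA]
    rw [if_pos hx, hP]
  rw [hgx, edist_dist, Real.dist_eq]
  have habs : |f x - (sInf (f '' P) + ε.toReal / 2)| ≤ ε.toReal / 2 := by
    rw [abs_le]; constructor <;> linarith
  calc ENNReal.ofReal |f x - (sInf (f '' P) + ε.toReal / 2)|
      ≤ ENNReal.ofReal (ε.toReal / 2) := ENNReal.ofReal_le_ofReal habs
    _ = ε / 2 := by
        rw [ENNReal.ofReal_div_of_pos two_pos, ENNReal.ofReal_toReal hεtop]
        norm_num

end Construction

theorem lemmaA (f : X → ℝ) (K : Set X) (ε : ℝ≥0∞) (hεtop : ε ≠ ⊤)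
    (hfrag : EpsFragOn f K ε) :
    ∃ g : X → ℝ, (∀ x ∈ K, edist (f x) (g x) ≤ ε / 2) ∧
      ∀ F : Set X, F ⊆ K → F.Nonempty → ∃ V : Set X, IsOpen V ∧ (V ∩ F).Nonempty ∧
        ∀ x ∈ V ∩ F, ∀ y ∈ V ∩ F, g x = g y :=
  ⟨gA f K ε hfrag, fun _ hx => gA_close f K ε hfrag hεtop hx, gA_const_on_pieces f K ε hfrag⟩

end Aux

section Assembly

variable {X : Type u} [TopologicalSpace X]

theorem diam_image_le_of_unifDist (f g : X → ℝ) (S : Set X) :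
    EMetric.diam (f '' S) ≤ EMetric.diam (g '' S) + unifDist f g * 2 := by
  apply EMetric.diam_le
  rintro a ⟨x, hx, rfl⟩ b ⟨y, hy, rfl⟩
  have h1 : edist (f x) (g x) ≤ unifDist f g := le_iSup (fun z => edist (f z) (g z)) x
  have h2 : edist (g y) (f y) ≤ unifDist f g := by
    rw [edist_comm]
    exact le_iSup (fun z => edist (f z) (g z)) y
  have h3 : edist (g x) (g y) ≤ EMetric.diam (g '' S) :=
    EMetric.edist_le_diam_of_mem (Set.mem_image_of_mem g hx) (Set.mem_image_of_mem g hy)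
  calc edist (f x) (f y) ≤ edist (f x) (g x) + edist (g x) (g y) + edist (g y) (f y) :=
        edist_triangle4 _ _ _ _
    _ ≤ unifDist f g + EMetric.diam (g '' S) + unifDist f g := by gcongr
    _ = EMetric.diam (g '' S) + unifDist f g * 2 := by ring

/-- The main construction: from an `ε`-σ-fragmentation of `f` by resolvable sets, produce a
σ-fragmented `g` (index `0`) within `ε/2` of `f`. -/
theorem exists_good (f : X → ℝ) {ε : ℝ≥0∞} (hεtop : ε ≠ ⊤) (hεpos : 0 < ε)
    (H : ℕ → Set X) (hres : ∀ n, Resolvable (H n)) (hcov : (⋃ n, H n) = Set.univ)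
    (hfragn : ∀ n, EpsFragOn f (H n) ε) :
    ∃ g : X → ℝ, sfragIdx g = 0 ∧ unifDist f g ≤ ε / 2 := by
  classical
  -- disjointify the cover
  set K : ℕ → Set X := fun n => H n \ ⋃ m < n, H m with hKdef
  have hKres : ∀ n, Resolvable (K n) := by
    intro n
    refine ((hres n).inter (resolvable_biUnion_lt H hres n).compl).congr_set ?_
    simp only [hKdef]
    rw [Set.diff_eq]
  have hKfrag : ∀ n, EpsFragOn f (K n) ε := fun n => (hfragn n).mono Set.diff_subset
  -- the per-piece approximants
  have hg : ∀ n, ∃ g : X → ℝ, (∀ x ∈ K n, edist (f x) (g x) ≤ ε / 2) ∧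
      ∀ F : Set X, F ⊆ K n → F.Nonempty → ∃ V : Set X, IsOpen V ∧ (V ∩ F).Nonempty ∧
        ∀ x ∈ V ∩ F, ∀ y ∈ V ∩ F, g x = g y :=
    fun n => lemmaA f (K n) ε hεtop (hKfrag n)
  choose gn hgn1 hgn2 using hg
  have hex : ∀ x : X, ∃ n, x ∈ H n := by
    intro x
    have : x ∈ ⋃ n, H n := hcov ▸ Set.mem_univ x
    exact Set.mem_iUnion.mp this
  set N : X → ℕ := fun x => Nat.find (hex x) with hNdef
  set g : X → ℝ := fun x => gn (N x) x with hgdef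
  have hxKN : ∀ x : X, x ∈ K (N x) := by
    intro x
    refine ⟨Nat.find_spec (hex x), ?_⟩
    intro hc
    obtain ⟨m, hm⟩ := Set.mem_iUnion.mp hc
    obtain ⟨hmlt, hmx⟩ := Set.mem_iUnion.mp hm
    exact Nat.find_min (hex x) hmlt hmx
  have hNeq : ∀ n, ∀ x ∈ K n, N x = n := by
    intro n x hx
    refine le_antisymm (Nat.find_min' (hex x) hx.1) ?_
    by_contra hc
    push_neg at hc
    exact hx.2 (Set.mem_iUnion.mpr ⟨N x, Set.mem_iUnion.mpr ⟨hc, Nat.find_spec (hex x)⟩⟩)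
  have hgK : ∀ n, ∀ x ∈ K n, g x = gn n x := by
    intro n x hx
    rw [hgdef]
    simp only
    rw [hNeq n x hx]
  refine ⟨g, ?_, ?_⟩
  · -- sfragIdx g = 0
    refine le_antisymm ?_ zero_le
    refine ENNReal.le_of_forall_pos_le_add ?_
    intro δ hδ _
    rw [zero_add]
    refine sInf_le ?_
    refine ⟨by exact_mod_cast hδ, K, hKres, ?_, ?_⟩
    · apply Set.eq_univ_of_forall
      intro x
      exact Set.mem_iUnion.mpr ⟨N x, hxKN x⟩
    · intro n F hF hFne
      obtain ⟨V, hV, hVne, hconst⟩ := hgn2 n F hF hFne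
      refine ⟨V, hV, hVne, ?_⟩
      apply EMetric.diam_le
      rintro a ⟨x, hx, rfl⟩ b ⟨y, hy, rfl⟩
      have : g x = g y := by
        rw [hgK n x (hF hx.2), hgK n y (hF hy.2)]
        exact hconst x hx y hy
      rw [this, edist_self]
      exact zero_le
  · -- unifDist f g ≤ ε / 2
    refine iSup_le ?_
    intro x
    have := hgn1 (N x) x (hxKN x)
    rwa [← hgK (N x) x (hxKN x)] at this
end Assembly

/-- for real-valued functions, `d(f, σFrag(X,ℝ)) = (1/2)·σ-frag(f)`. -/
theorem stmt_7 {X : Type*} [TopologicalSpace X] (f : X → ℝ) :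
    distToSFrag f = sfragIdx f / 2 := by
  apply le_antisymm
  · rw [ENNReal.le_div_iff_mul_le (Or.inl two_ne_zero) (Or.inl ENNReal.ofNat_ne_top)]
    refine le_sInf ?_
    intro ε hε
    obtain ⟨hεpos, H, hres, hcov, hfragn⟩ := hε
    by_cases hεtop : ε = ⊤
    · rw [hεtop]; exact le_top
    · obtain ⟨g, hg0, hgd⟩ := exists_good f hεtop hεpos H hres hcov hfragn
      have h1 : distToSFrag f ≤ ε / 2 :=
        le_trans (iInf_le _ (⟨g, hg0⟩ : {g : X → ℝ // sfragIdx g = 0})) hgd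
      calc distToSFrag f * 2 ≤ ε / 2 * 2 := by gcongr
        _ = ε := ENNReal.div_mul_cancel two_ne_zero ENNReal.ofNat_ne_top
  · refine le_iInf ?_
    rintro ⟨g, hg0⟩
    rw [ENNReal.div_le_iff_le_mul (Or.inl two_ne_zero) (Or.inl ENNReal.ofNat_ne_top)]
    refine ENNReal.le_of_forall_pos_le_add ?_
    intro δ hδ _
    have hδ' : (0:ℝ≥0∞) < δ := by exact_mod_cast hδ
    have hlt : sfragIdx g < δ := by rw [hg0]; exact hδ'
    obtain ⟨ε, hmem, hεδ⟩ := sInf_lt_iff.mp hlt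
    obtain ⟨hεpos, H, hres, hcov, hfragn⟩ := hmem
    have hmem2 : (unifDist f g * 2 + ε) ∈ {ε' : ℝ≥0∞ | 0 < ε' ∧ ∃ H : ℕ → Set X,
        (∀ n, Resolvable (H n)) ∧ (⋃ n, H n) = Set.univ ∧ ∀ n, EpsFragOn f (H n) ε'} := by
      refine ⟨lt_of_lt_of_le hεpos le_add_self, H, hres, hcov, ?_⟩
      intro n F hF hFne
      obtain ⟨V, hV, hVne, hdiam⟩ := hfragn n F hF hFne
      refine ⟨V, hV, hVne, ?_⟩
      calc EMetric.diam (f '' (V ∩ F)) ≤ EMetric.diam (g '' (V ∩ F)) + unifDist f g * 2 :=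
            diam_image_le_of_unifDist f g _
        _ ≤ ε + unifDist f g * 2 := by gcongr
        _ = unifDist f g * 2 + ε := add_comm _ _
    calc sfragIdx f ≤ unifDist f g * 2 + ε := sInf_le hmem2
      _ ≤ unifDist f g * 2 + δ := by gcongr
end

section
/- Let X be a topological space, (E,ρ) and (F,σ) metric spaces, and h: E → F uniformly continuous. Then for every f: X → E, the oscillation rank satisfies β(h ∘ f) ≤ β(f). -/
open Set Filter Ordinal ENNReal

universe u v

section Aux

variable {X : Type*} {E : Type*} [TopologicalSpace X] [PseudoEMetricSpace E]

theorem oscSet_zero (f : X → E) (ε : ℝ≥0∞) : oscSet f ε 0 = ∅ := by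
  simp [oscSet]

theorem oscSet_succ (f : X → E) (ε : ℝ≥0∞) (o : Ordinal) :
    oscSet f ε (Order.succ o) = oscSet f ε o ∪ {x | x ∉ oscSet f ε o ∧ ∃ V : Set X,
      IsOpen V ∧ x ∈ V ∧ EMetric.diam (f '' (V \ oscSet f ε o)) < ε} := by
  simp [oscSet, Ordinal.limitRecOn_succ]

theorem oscSet_limit (f : X → E) (ε : ℝ≥0∞) (o : Ordinal) (ho : Order.IsSuccLimit o) :
    oscSet f ε o = ⋃ β < o, oscSet f ε β := by
  simp [oscSet, Ordinal.limitRecOn_limit _ _ _ _ ho]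

end Aux

/-- composing with a uniformly continuous map does not increase the
oscillation rank: `β(h ∘ f) ≤ β(f)`. -/
theorem stmt_12 {X E F : Type*} [TopologicalSpace X] [MetricSpace E] [MetricSpace F]
    (h : E → F) (hh : UniformContinuous h) (f : X → E) (κ : Ordinal)
    (hf : ∀ ε : ℝ≥0∞, 0 < ε → ∃ α ≤ κ, oscSet f ε α = Set.univ) :
    ∀ ε : ℝ≥0∞, 0 < ε → ∃ α ≤ κ, oscSet (h ∘ f) ε α = Set.univ := by
  intro ε hε
  set ε0 : ℝ≥0∞ := min ε 1 with hε0def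
  have hε0pos : 0 < ε0 := lt_min hε one_pos
  have hε0ne : ε0 ≠ 0 := hε0pos.ne'
  have hε0top : ε0 ≠ ⊤ := ne_top_of_le_ne_top one_ne_top (min_le_right _ _)
  have hhalf : ε0 / 2 < ε := lt_of_lt_of_le (ENNReal.half_lt_self hε0ne hε0top)
    (min_le_left _ _)
  obtain ⟨δ, hδpos, hδ⟩ := (EMetric.uniformContinuous_iff.mp hh) (ε0 / 2)
    (ENNReal.half_pos hε0ne)
  obtain ⟨α, hακ, hα⟩ := hf δ hδpos
  refine ⟨α, hακ, ?_⟩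
  have key : ∀ o : Ordinal, oscSet f δ o ⊆ oscSet (h ∘ f) ε o := by
    intro o
    induction o using Ordinal.limitRecOn with
    | zero => simp [oscSet_zero]
    | add_one o ih =>
      rw [← Order.succ_eq_add_one, oscSet_succ, oscSet_succ]
      rintro x (hx | ⟨hx, V, hV, hxV, hdiam⟩)
      · exact Or.inl (ih hx)
      · by_cases hx' : x ∈ oscSet (h ∘ f) ε o
        · exact Or.inl hx'
        · refine Or.inr ⟨hx', V, hV, hxV, ?_⟩
          have hsub : V \ oscSet (h ∘ f) ε o ⊆ V \ oscSet f δ o := fun y hy =>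
            ⟨hy.1, fun hy' => hy.2 (ih hy')⟩
          calc EMetric.diam ((h ∘ f) '' (V \ oscSet (h ∘ f) ε o))
              ≤ ε0 / 2 := by
                apply EMetric.diam_le
                rintro _ ⟨a, ha, rfl⟩ _ ⟨b, hb, rfl⟩
                have : edist (f a) (f b) < δ :=
                  lt_of_le_of_lt (EMetric.edist_le_diam_of_mem
                    (Set.mem_image_of_mem f (hsub ha))
                    (Set.mem_image_of_mem f (hsub hb))) hdiam
                exact (hδ this).le
            _ < ε := hhalf
    | limit o ho ih =>
      rw [oscSet_limit _ _ _ ho, oscSet_limit _ _ _ ho]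
      exact Set.iUnion₂_mono fun β hβ => ih β hβ
  exact Set.eq_univ_of_univ_subset (hα ▸ key α)
end
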